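/- Let X be a group that is residually a finite π-group and Y a locally cyclic subgroup of X. Then the π'-isolator of Y in X (the smallest π'-isolated subgroup containing Y) is locally cyclic. -/

import Mathlib

open Pointwise

def IsPiNumber (π : Set ℕ) (n : ℕ) : Prop := n ≠ 0 ∧ ∀ p : ℕ, p.Prime → p ∣ n → p ∈ π

def IsPiPrimeNumber (π : Set ℕ) (n : ℕ) : Prop := n ≠ 0 ∧ ∀ p : ℕ, p.Prime → p ∣ n → p ∉ π

/-- `N` is a normal subgroup of finite π-index, i.e. `N ∈ Ω_π(X)`. -/
def InOmega (π : Set ℕ) {X : Type*} [Group X] (N : Subgroup X) : Prop :=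
  N.Normal ∧ IsPiNumber π N.index

/-- `Y` is separable by the family `F` of subgroups. -/
def SepBy {X : Type*} [Group X] (F : Set (Subgroup X)) (Y : Subgroup X) : Prop :=
  (⋂ N ∈ F, (Y : Set X) * (N : Set X)) = (Y : Set X)

/-- `Y` is 𝓕_π-separable in `X`. -/
def SepIn (π : Set ℕ) {X : Type*} [Group X] (Y : Subgroup X) : Prop :=
  SepBy {N : Subgroup X | InOmega π N} Y

/-- `Y` is π'-isolated in `X`. -/
def Isolated (π : Set ℕ) {X : Type*} [Group X] (Y : Subgroup X) : Prop :=
  ∀ x : X, ∀ q : ℕ, IsPiPrimeNumber π q → x ^ q ∈ Y → x ∈ Y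

/-- `X` is residually a finite π-group. -/
def ResiduallyPi (π : Set ℕ) (X : Type*) [Group X] : Prop :=
  ∀ x : X, x ≠ 1 → ∃ N : Subgroup X, InOmega π N ∧ x ∉ N

/-- A subgroup `Z` of `X` is locally cyclic (every two of its elements lie in a
common cyclic subgroup of `Z`). -/
def LocCyclic {X : Type*} [Group X] (Z : Subgroup X) : Prop :=
  ∀ a ∈ Z, ∀ b ∈ Z, ∃ c ∈ Z, a ∈ Subgroup.zpowers c ∧ b ∈ Subgroup.zpowers c

namespace IsolatorAux

lemma one_pi' (π : Set ℕ) : IsPiPrimeNumber π 1 :=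
  ⟨one_ne_zero, fun p hp hd _ => hp.one_lt.ne' (Nat.eq_one_of_dvd_one hd) |>.elim⟩

lemma mul_pi' {π : Set ℕ} {q r : ℕ} (hq : IsPiPrimeNumber π q) (hr : IsPiPrimeNumber π r) :
    IsPiPrimeNumber π (q * r) := by
  refine ⟨mul_ne_zero hq.1 hr.1, fun p hp hd hmem => ?_⟩
  rcases (Nat.Prime.dvd_mul hp).mp hd with h | h
  · exact hq.2 p hp h hmem
  · exact hr.2 p hp h hmem

lemma coprime_of_pi_pi' {π : Set ℕ} {n q : ℕ}
    (hn : ∀ p, p.Prime → p ∣ n → p ∈ π) (hq : IsPiPrimeNumber π q) : Nat.Coprime n q := by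
  rw [Nat.coprime_iff_gcd_eq_one]
  by_contra h
  obtain ⟨p, hp, hpd⟩ := Nat.exists_prime_and_dvd h
  exact hq.2 p hp (hpd.trans (Nat.gcd_dvd_right n q))
    (hn p hp (hpd.trans (Nat.gcd_dvd_left n q)))

lemma mem_zpowers_pow_self {Q : Type*} [Group Q] (x : Q) {q : ℕ}
    (h : Nat.Coprime q (orderOf x)) (hord : orderOf x ≠ 0) :
    x ∈ Subgroup.zpowers (x ^ q) := by
  rcases eq_or_lt_of_le (Nat.one_le_iff_ne_zero.mpr hord) with h1 | h1
  · have : x = 1 := orderOf_eq_one_iff.mp h1.symm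
    simp [this]
  · obtain ⟨s, -, hs⟩ := Nat.exists_mul_mod_eq_one_of_coprime h h1
    refine ⟨(s : ℤ), ?_⟩
    show (x ^ q) ^ (s : ℤ) = x
    rw [zpow_natCast, ← pow_mul, ← pow_mod_orderOf, hs, pow_one]

/-- In the quotient by a π-index normal subgroup, `x` lies in the cyclic group
generated by the image of `c` whenever `x ^ q ∈ zpowers c` for a π'-number `q`. -/
lemma quot_mem_zpowers {π : Set ℕ} {X : Type*} [Group X] {N : Subgroup X} [N.Normal]
    (hind : IsPiNumber π N.index) {x c : X} {q : ℕ} (hq : IsPiPrimeNumber π q)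
    (h : x ^ q ∈ Subgroup.zpowers c) :
    (x : X ⧸ N) ∈ Subgroup.zpowers (c : X ⧸ N) := by
  have hcard : Nat.card (X ⧸ N) = N.index := (Subgroup.index_eq_card N).symm
  haveI : Finite (X ⧸ N) := Nat.finite_of_card_ne_zero (by rw [hcard]; exact hind.1)
  set xb : X ⧸ N := (x : X ⧸ N)
  have hord : orderOf xb ∣ N.index := by rw [← hcard]; exact orderOf_dvd_natCard xb
  have hordne : orderOf xb ≠ 0 := by
    intro h0; rw [h0] at hord; exact hind.1 (Nat.eq_zero_of_zero_dvd hord)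
  have hpi : ∀ p, p.Prime → p ∣ orderOf xb → p ∈ π :=
    fun p hp hd => hind.2 p hp (hd.trans hord)
  have hcop : Nat.Coprime q (orderOf xb) :=
    (coprime_of_pi_pi' hpi hq).symm
  have h1 : xb ∈ Subgroup.zpowers (xb ^ q) := mem_zpowers_pow_self xb hcop hordne
  have h2 : xb ^ q ∈ Subgroup.zpowers ((c : X ⧸ N)) := by
    obtain ⟨m, hm⟩ := h
    refine ⟨m, ?_⟩
    show ((c : X ⧸ N)) ^ m = xb ^ q
    have hmm : ((c ^ m : X) : X ⧸ N) = ((x ^ q : X) : X ⧸ N) := congrArg _ hm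
    simpa using hmm
  exact (Subgroup.zpowers_le.mpr h2) h1

/-- π'-torsion is trivial in a residually-π group. -/
lemma eq_one_of_pow_pi' {π : Set ℕ} {X : Type*} [Group X] (hres : ResiduallyPi π X)
    {x : X} {q : ℕ} (hq : IsPiPrimeNumber π q) (h : x ^ q = 1) : x = 1 := by
  by_contra hx
  obtain ⟨N, ⟨hNnorm, hNind⟩, hxN⟩ := hres x hx
  haveI := hNnorm
  apply hxN
  rw [← QuotientGroup.eq_one_iff]
  have hcard : Nat.card (X ⧸ N) = N.index := (Subgroup.index_eq_card N).symm
  haveI : Finite (X ⧸ N) := Nat.finite_of_card_ne_zero (by rw [hcard]; exact hNind.1)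
  set xb : X ⧸ N := (x : X ⧸ N)
  have hord : orderOf xb ∣ N.index := by rw [← hcard]; exact orderOf_dvd_natCard xb
  have hpi : ∀ p, p.Prime → p ∣ orderOf xb → p ∈ π :=
    fun p hp hd => hNind.2 p hp (hd.trans hord)
  have hdq : orderOf xb ∣ q := by
    apply orderOf_dvd_of_pow_eq_one
    have hmm : ((x ^ q : X) : X ⧸ N) = ((1 : X) : X ⧸ N) := congrArg _ h
    simpa using hmm
  have hcop : Nat.Coprime (orderOf xb) q := coprime_of_pi_pi' hpi hq
  have h1 : orderOf xb = 1 := Nat.eq_one_of_dvd_coprimes hcop dvd_rfl hdq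
  exact orderOf_eq_one_iff.mp h1



/-- Two elements having π'-powers in a locally cyclic subgroup commute. -/
lemma commute_of_pow_mem {π : Set ℕ} {X : Type*} [Group X] (hres : ResiduallyPi π X)
    {Y : Subgroup X} (hY : LocCyclic Y) {x y : X} {q r : ℕ}
    (hq : IsPiPrimeNumber π q) (hr : IsPiPrimeNumber π r)
    (hx : x ^ q ∈ Y) (hy : y ^ r ∈ Y) : Commute x y := by
  obtain ⟨c, hcY, hxc, hyc⟩ := hY _ hx _ hy
  have key : x * y * x⁻¹ * y⁻¹ = 1 := by
    by_contra hk
    obtain ⟨N, ⟨hNnorm, hNind⟩, hkN⟩ := hres _ hk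
    haveI := hNnorm
    apply hkN
    rw [← QuotientGroup.eq_one_iff]
    have h1 : (x : X ⧸ N) ∈ Subgroup.zpowers (c : X ⧸ N) :=
      quot_mem_zpowers hNind hq hxc
    have h2 : (y : X ⧸ N) ∈ Subgroup.zpowers (c : X ⧸ N) :=
      quot_mem_zpowers hNind hr hyc
    obtain ⟨s, hs⟩ := h1
    obtain ⟨t, ht⟩ := h2
    have hcomm : Commute ((x : X ⧸ N)) ((y : X ⧸ N)) := by
      rw [← hs, ← ht]; exact (Commute.refl _).zpow_zpow s t
    have : ((x * y * x⁻¹ * y⁻¹ : X) : X ⧸ N)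
        = (x : X ⧸ N) * (y : X ⧸ N) * (x : X ⧸ N)⁻¹ * (y : X ⧸ N)⁻¹ := by push_cast; rfl
    rw [this, hcomm.eq]
    group
  show x * y = y * x
  have h2 : x * y * x⁻¹ = y := by
    have := mul_inv_eq_one.mp key
    exact this
  calc x * y = (x * y * x⁻¹) * x := by group
    _ = y * x := by rw [h2]


/-- The set of elements with a π'-power in `Y`, as a subgroup. -/
def rootSub (π : Set ℕ) {X : Type*} [Group X] (hres : ResiduallyPi π X)
    (Y : Subgroup X) (hY : LocCyclic Y) : Subgroup X where
  carrier := {x | ∃ q, IsPiPrimeNumber π q ∧ x ^ q ∈ Y}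
  one_mem' := ⟨1, one_pi' π, by simpa using Y.one_mem⟩
  inv_mem' := by
    rintro x ⟨q, hq, h⟩
    exact ⟨q, hq, by rw [inv_pow]; exact Y.inv_mem h⟩
  mul_mem' := by
    rintro x y ⟨q, hq, hxq⟩ ⟨r, hr, hyr⟩
    refine ⟨q * r, mul_pi' hq hr, ?_⟩
    have hc : Commute x y := commute_of_pow_mem hres hY hq hr hxq hyr
    rw [hc.mul_pow]
    refine Y.mul_mem ?_ ?_
    · rw [pow_mul]; exact Y.pow_mem hxq r
    · rw [mul_comm q r, pow_mul]; exact Y.pow_mem hyr q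

lemma mem_rootSub {π : Set ℕ} {X : Type*} [Group X] {hres : ResiduallyPi π X}
    {Y : Subgroup X} {hY : LocCyclic Y} {x : X} :
    x ∈ rootSub π hres Y hY ↔ ∃ q, IsPiPrimeNumber π q ∧ x ^ q ∈ Y := Iff.rfl

end IsolatorAux

open IsolatorAux in
/-- If `X` is residually a finite π-group and `Y` is locally cyclic, then the
π'-isolator of `Y` (the smallest π'-isolated subgroup containing `Y`) is locally cyclic. -/
theorem isolator_locCyclic (π : Set ℕ) {X : Type*} [Group X]
    (hres : ResiduallyPi π X) (Y : Subgroup X) (hY : LocCyclic Y)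
    (Z : Subgroup X) (hYZ : Y ≤ Z) (hZ : Isolated π Z)
    (hmin : ∀ W : Subgroup X, Y ≤ W → Isolated π W → Z ≤ W) :
    LocCyclic Z := by
  intro a haZ b hbZ
  have hW : Z ≤ rootSub π hres Y hY := by
    apply hmin
    · intro y hy; exact ⟨1, one_pi' π, by simpa using hy⟩
    · intro x q hq hxq
      obtain ⟨r, hr, h⟩ := hxq
      exact ⟨q * r, mul_pi' hq hr, by rw [pow_mul]; exact h⟩
  obtain ⟨q, hq, haY⟩ := hW haZ
  obtain ⟨r, hr, hbY⟩ := hW hbZ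
  obtain ⟨c, hcY, hac, hbc⟩ := hY _ haY _ hbY
  obtain ⟨m, hm⟩ := hac
  obtain ⟨n, hn⟩ := hbc
  have hqr : IsPiPrimeNumber π (q * r) := mul_pi' hq hr
  have hab : Commute a b := commute_of_pow_mem hres hY hq hr haY hbY
  set s : ℤ := ((q * r : ℕ) : ℤ) with hs_def
  set M : ℤ := m * (r : ℤ) with hM_def
  set Nn : ℤ := n * (q : ℤ) with hN_def
  have hA : a ^ s = c ^ M := by
    have h1 : a ^ (q * r) = (c ^ m) ^ (r : ℤ) := by
      rw [pow_mul, ← hm]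
      norm_cast
    rw [hs_def, zpow_natCast, h1, ← zpow_mul]
  have hB : b ^ s = c ^ Nn := by
    have h1 : b ^ (q * r) = (c ^ n) ^ (q : ℤ) := by
      rw [mul_comm q r, pow_mul, ← hn]
      norm_cast
    rw [hs_def, zpow_natCast, h1, ← zpow_mul]
  set d : ℕ := Int.gcd M Nn with hd_def
  by_cases hd : d = 0
  · -- both a and b are trivial
    obtain ⟨hM0, hN0⟩ := Int.gcd_eq_zero_iff.mp hd
    have ha1 : a = 1 := by
      refine eq_one_of_pow_pi' hres hqr ?_
      have : a ^ s = 1 := by rw [hA, hM0, zpow_zero]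
      rwa [hs_def, zpow_natCast] at this
    have hb1 : b = 1 := by
      refine eq_one_of_pow_pi' hres hqr ?_
      have : b ^ s = 1 := by rw [hB, hN0, zpow_zero]
      rwa [hs_def, zpow_natCast] at this
    exact ⟨1, Z.one_mem, by rw [ha1]; exact Subgroup.one_mem _,
      by rw [hb1]; exact Subgroup.one_mem _⟩
  · have hdM : (d : ℤ) ∣ M := Int.gcd_dvd_left M Nn
    have hdN : (d : ℤ) ∣ Nn := Int.gcd_dvd_right M Nn
    have hbez : (d : ℤ) = M * Int.gcdA M Nn + Nn * Int.gcdB M Nn := Int.gcd_eq_gcd_ab M Nn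
    set u : ℤ := Int.gcdA M Nn
    set v : ℤ := Int.gcdB M Nn
    set g : X := a ^ u * b ^ v with hg_def
    have hgZ : g ∈ Z := Z.mul_mem (Z.zpow_mem haZ u) (Z.zpow_mem hbZ v)
    have hg : g ^ s = c ^ (d : ℤ) := by
      rw [hg_def, (hab.zpow_zpow u v).mul_zpow]
      have e1 : (a ^ u) ^ s = c ^ (M * u) := by
        rw [← zpow_mul, mul_comm u s, zpow_mul, hA, ← zpow_mul]
      have e2 : (b ^ v) ^ s = c ^ (Nn * v) := by
        rw [← zpow_mul, mul_comm v s, zpow_mul, hB, ← zpow_mul]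
      rw [e1, e2, ← zpow_add, ← hbez]
    have hcomm_ag : Commute a g :=
      ((Commute.refl a).zpow_right u).mul_right (hab.zpow_right v)
    have hcomm_bg : Commute b g :=
      (hab.symm.zpow_right u).mul_right ((Commute.refl b).zpow_right v)
    have step : ∀ x : X, Commute x g → ∀ e T : ℤ, (d : ℤ) * e = T →
        x ^ s = c ^ T → x = g ^ e := by
      intro x hcxg e T hde hxs
      have hge : (g ^ e) ^ s = x ^ s := by
        rw [← zpow_mul, mul_comm e s, zpow_mul, hg, ← zpow_mul, hde, hxs]
      have hone : (x * (g ^ e)⁻¹) ^ (q * r) = 1 := by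
        have hc : Commute x ((g ^ e)⁻¹) := (hcxg.zpow_right e).inv_right
        rw [hc.mul_pow, inv_pow]
        have e1 : (g ^ e) ^ (q * r) = x ^ (q * r) := by
          have := hge
          rwa [hs_def, zpow_natCast, zpow_natCast] at this
        rw [e1, mul_inv_cancel]
      exact mul_inv_eq_one.mp (eq_one_of_pow_pi' hres hqr hone)
    have ha' : a = g ^ (M / (d : ℤ)) :=
      step a hcomm_ag _ M (Int.mul_ediv_cancel' hdM) hA
    have hb' : b = g ^ (Nn / (d : ℤ)) :=
      step b hcomm_bg _ Nn (Int.mul_ediv_cancel' hdN) hB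
    exact ⟨g, hgZ, ⟨M / (d : ℤ), ha'.symm⟩, ⟨Nn / (d : ℤ), hb'.symm⟩⟩
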